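/- For nonnegative integers i,j,k,l with j ≤ l, define P(i,j;k,l) = #{(m,n) : l+2 ≤ m+n ≤ k+l+1, 1 ≤ m ≤ i, 1 ≤ n ≤ j} − #{(m,n) : 1 ≤ m+n ≤ i, 1 ≤ m ≤ k, 1 ≤ n ≤ l}. Then P(i,j;k,l) = P(i,j−1;k,l−1) whenever j ≥ 1 and l ≥ 1. -/

import Mathlib

lemma splitA (i j' k l' : ℕ) :
    ((Finset.Icc 1 i ×ˢ Finset.Icc 1 (j'+1)).filter
      (fun p => (l'+1) + 2 ≤ p.1 + p.2 ∧ p.1 + p.2 ≤ k + (l'+1) + 1)).card =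
    ((Finset.Icc 1 i ×ˢ Finset.Icc 1 j').filter
      (fun p => l' + 2 ≤ p.1 + p.2 ∧ p.1 + p.2 ≤ k + l' + 1)).card +
    ((Finset.Icc 1 i).filter (fun m => l' + 2 ≤ m ∧ m ≤ k + l' + 1)).card := by
  rw [← Finset.card_filter_add_card_filter_not
    (p := fun p : ℕ × ℕ => 2 ≤ p.2) (s := (Finset.Icc 1 i ×ˢ Finset.Icc 1 (j'+1)).filter
      (fun p => (l'+1) + 2 ≤ p.1 + p.2 ∧ p.1 + p.2 ≤ k + (l'+1) + 1))]
  congr 1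
  · apply Finset.card_nbij' (fun p => (p.1, p.2 - 1)) (fun p => (p.1, p.2 + 1))
    · intro p hp; simp [Finset.mem_filter, Finset.mem_product] at hp ⊢; omega
    · intro p hp; simp [Finset.mem_filter, Finset.mem_product] at hp ⊢; omega
    · intro p hp; simp [Finset.mem_filter, Finset.mem_product] at hp
      simp [Prod.ext_iff]; omega
    · intro p hp; simp [Finset.mem_filter, Finset.mem_product] at hp
      simp
  · apply Finset.card_nbij' (fun p => p.1) (fun m => (m, 1))
    · intro p hp; simp [Finset.mem_filter, Finset.mem_product] at hp ⊢; omega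
    · intro p hp; simp [Finset.mem_filter, Finset.mem_product] at hp ⊢; omega
    · intro p hp; simp [Finset.mem_filter, Finset.mem_product] at hp
      simp [Prod.ext_iff]; omega
    · intro p hp; rfl

lemma splitB (i k l' : ℕ) :
    ((Finset.Icc 1 k ×ˢ Finset.Icc 1 (l'+1)).filter
      (fun p => 1 ≤ p.1 + p.2 ∧ p.1 + p.2 ≤ i)).card =
    ((Finset.Icc 1 k ×ˢ Finset.Icc 1 l').filter
      (fun p => 1 ≤ p.1 + p.2 ∧ p.1 + p.2 ≤ i)).card +
    ((Finset.Icc 1 k).filter (fun m => m + l' + 1 ≤ i)).card := by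
  rw [← Finset.card_filter_add_card_filter_not
    (p := fun p : ℕ × ℕ => p.2 ≤ l') (s := (Finset.Icc 1 k ×ˢ Finset.Icc 1 (l'+1)).filter
      (fun p => 1 ≤ p.1 + p.2 ∧ p.1 + p.2 ≤ i))]
  congr 1
  · apply Finset.card_nbij' (fun p => p) (fun p => p)
    · intro p hp; simp [Finset.mem_filter, Finset.mem_product] at hp ⊢; omega
    · intro p hp; simp [Finset.mem_filter, Finset.mem_product] at hp ⊢; omega
    · intro p hp; rfl
    · intro p hp; rfl
  · apply Finset.card_nbij' (fun p => p.1) (fun m => (m, l' + 1))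
    · intro p hp; simp [Finset.mem_filter, Finset.mem_product] at hp ⊢; omega
    · intro p hp; simp [Finset.mem_filter, Finset.mem_product] at hp ⊢; omega
    · intro p hp; simp [Finset.mem_filter, Finset.mem_product] at hp
      simp [Prod.ext_iff]; omega
    · intro p hp; rfl

lemma crossAB (i k l' : ℕ) :
    ((Finset.Icc 1 i).filter (fun m => l' + 2 ≤ m ∧ m ≤ k + l' + 1)).card =
    ((Finset.Icc 1 k).filter (fun m => m + l' + 1 ≤ i)).card := by
  apply Finset.card_nbij' (fun m => m - (l' + 1)) (fun m => m + (l' + 1))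
  · intro m hm; simp at hm ⊢; omega
  · intro m hm; simp at hm ⊢; omega
  · intro m hm; simp at hm; dsimp only; omega
  · intro m hm; simp at hm; dsimp only; omega

/-- The counting function `P(i,j;k,l)` (defined for `j ≤ l`) giving the power
of `q²` in the quasi-commutation of quantum cluster variables. -/
def Pfun (i j k l : ℕ) : ℤ :=
  (((Finset.Icc 1 i ×ˢ Finset.Icc 1 j).filter
      (fun p => l + 2 ≤ p.1 + p.2 ∧ p.1 + p.2 ≤ k + l + 1)).card : ℤ) -
  (((Finset.Icc 1 k ×ˢ Finset.Icc 1 l).filter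
      (fun p => 1 ≤ p.1 + p.2 ∧ p.1 + p.2 ≤ i)).card : ℤ)

/-- `P(i,j;k,l) = P(i,j−1;k,l−1)` for `1 ≤ j ≤ l`. -/
theorem stmt4 (i j k l : ℕ) (hj : 1 ≤ j) (hl : 1 ≤ l) (hjl : j ≤ l) :
    Pfun i j k l = Pfun i (j - 1) k (l - 1) := by
  obtain ⟨j', rfl⟩ : ∃ j', j = j' + 1 := ⟨j - 1, by omega⟩
  obtain ⟨l', rfl⟩ : ∃ l', l = l' + 1 := ⟨l - 1, by omega⟩
  simp only [Pfun, Nat.add_sub_cancel]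
  rw [splitA i j' k l', splitB i k l', crossAB i k l']
  push_cast
  ring
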